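/- Honest advantage implies honest blocks: let c be a chain with strictly decreasing, pairwise distinct slot numbers, all lying in a slot interval I, and suppose every block b of c satisfies Winner b.bid b.slot. If the length of c is at least the number of adversarial slots in I plus w (where an adversarial slot is one won by some dishonest party), then c contains at least w honest blocks (blocks b with Honest b.bid). -/

import Mathlib

structure Block (Party : Type) where
  slot : Nat
  bid : Party

theorem honest_advantage_implies_honest_blocks {Party : Type}
    [Fintype Party] [DecidableEq Party]
    (Winner : Party → Nat → Bool) (Honest : Party → Bool)
    (c : List (Block Party))
    (hdec : ∀ i j (hij : i < j) (hj : j < c.length),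
      (c.get ⟨j, hj⟩).slot < (c.get ⟨i, lt_trans hij hj⟩).slot)
    (a b : Nat)
    (hin : ∀ blk ∈ c, a ≤ blk.slot ∧ blk.slot ≤ b)
    (hwin : ∀ blk ∈ c, Winner blk.bid blk.slot = true)
    (w : Nat)
    (hlen : ((Finset.Icc a b).filter
        (fun sl => ∃ p : Party, Winner p sl = true ∧ ¬ Honest p = true)).card + w
      ≤ c.length) :
    w ≤ (c.filter (fun blk => Honest blk.bid)).length := by
  classical
  set d := c.filter (fun blk => ¬ Honest blk.bid) with hd
  -- slots of c are pairwise distinct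
  have hpw : (c.map Block.slot).Pairwise (· > ·) := by
    rw [List.pairwise_iff_get]
    intro i j hij
    simp only [List.get_eq_getElem, List.getElem_map]
    have := hdec i j (by simpa using hij) (by
      have := j.isLt; simpa using this)
    convert this using 2 <;> rfl
  have hnodup : (c.map Block.slot).Nodup :=
    hpw.imp (fun h => ne_of_gt h)
  have hdsub : d.Sublist c := List.filter_sublist
  have hdnodup : (d.map Block.slot).Nodup :=
    hnodup.sublist (hdsub.map Block.slot)
  have hsub : (d.map Block.slot).toFinset ⊆
      (Finset.Icc a b).filter
        (fun sl => ∃ p : Party, Winner p sl = true ∧ ¬ Honest p = true) := by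
    intro sl hsl
    simp only [List.mem_toFinset, List.mem_map] at hsl
    obtain ⟨blk, hblk, rfl⟩ := hsl
    have hblkc : blk ∈ c := List.mem_of_mem_filter hblk
    have hH : ¬ Honest blk.bid = true := by
      have := List.of_mem_filter hblk
      simpa using this
    refine Finset.mem_filter.mpr ⟨?_, ⟨blk.bid, hwin blk hblkc, hH⟩⟩
    exact Finset.mem_Icc.mpr (hin blk hblkc)
  have hcard : d.length ≤
      ((Finset.Icc a b).filter
        (fun sl => ∃ p : Party, Winner p sl = true ∧ ¬ Honest p = true)).card := by
    calc d.length = (d.map Block.slot).length := (List.length_map _).symm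
      _ = (d.map Block.slot).toFinset.card :=
          (List.toFinset_card_of_nodup hdnodup).symm
      _ ≤ _ := Finset.card_le_card hsub
  have hsplit : (c.filter (fun blk => Honest blk.bid)).length + d.length = c.length := by
    rw [hd]
    have := List.length_eq_length_filter_add (l := c) (fun blk => Honest blk.bid)
    simpa using this.symm
  omega
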